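/- Let u₁ = (1, 0, 0), u₂ = (1/2, √3/2, 0) and e₃ = (0, 0, 1) in ℝ³, and let D̃₃ be the group generated by the reflection in the plane spanned by u₁ and e₃ (the plane y = 0) and the reflection in the plane spanned by u₂ and e₃. If L is a full-rank lattice in ℝ³ preserved by D̃₃, then there exist positive real numbers a, b such that, for the diagonal linear map D = diag(a, a, b), the lattice D⁻¹(L) is one of: L₍₃,₆₎ + ℤe₃; L₍₃,₆₎ᶜ + ℤe₃; L₍₃,₆₎ᶜ + ℤ(u₁ + e₃); or L₍₃,₆₎ᶜ + ℤ(u₂ + e₃). -/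

import Mathlib

noncomputable section

/-- `ℝ³`, as the space of triples of reals. -/
abbrev V3 := Fin 3 → ℝ

/-- A full-rank lattice in `ℝ³`. -/
def IsFullLattice (L : AddSubgroup V3) : Prop :=
  ∃ b : Module.Basis (Fin 3) ℝ V3,
    ∀ x, x ∈ L ↔ ∃ c : Fin 3 → ℤ, x = ∑ i, (c i : ℝ) • b i

/-- `u₁ = (1, 0, 0)`. -/
def u₁ : V3 := ![1, 0, 0]

/-- `u₂ = (1/2, √3/2, 0)`. -/
def u₂ : V3 := ![1 / 2, Real.sqrt 3 / 2, 0]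

/-- `e₃ = (0, 0, 1)`. -/
def e₃ : V3 := ![0, 0, 1]

/-- The lattice `L₍₃,₆₎ + ℤe₃`. -/
def triLat : Set V3 := {x | ∃ m n k : ℤ, x = m • u₁ + n • u₂ + k • e₃}

/-- The lattice `L₍₃,₆₎ᶜ + ℤe₃`. -/
def triCentredLat : Set V3 :=
  {x | ∃ m n k : ℤ, x = m • (u₁ + u₂) + n • ((2 : ℤ) • u₁ - u₂) + k • e₃}

/-- The lattice `L₍₃,₆₎ᶜ + ℤ(u₁ + e₃)`. -/
def triCentredLatU₁ : Set V3 :=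
  {x | ∃ m n k : ℤ, x = m • (u₁ + u₂) + n • ((2 : ℤ) • u₁ - u₂) + k • (u₁ + e₃)}

/-- The lattice `L₍₃,₆₎ᶜ + ℤ(u₂ + e₃)`. -/
def triCentredLatU₂ : Set V3 :=
  {x | ∃ m n k : ℤ, x = m • (u₁ + u₂) + n • ((2 : ℤ) • u₁ - u₂) + k • (u₂ + e₃)}

/-- The reflection in the plane `y = 0`, i.e. the plane spanned by `u₁` and `e₃`. -/
def reflPlaneU₁ : V3 → V3 := fun x => ![x 0, -(x 1), x 2]

/-- The reflection in the plane spanned by `u₂ = (1/2, √3/2, 0)` and `e₃`. -/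
def reflPlaneU₂ : V3 → V3 := fun x =>
  ![-(x 0) / 2 + (Real.sqrt 3 / 2) * x 1, (Real.sqrt 3 / 2) * x 0 + x 1 / 2, x 2]

open Complex


private def ζ : ℂ := ⟨1/2, Real.sqrt 3 / 2⟩
private lemma sqrt3_mul : Real.sqrt 3 * Real.sqrt 3 = 3 := Real.mul_self_sqrt (by norm_num)
private lemma ζ_re : ζ.re = 1/2 := rfl
private lemma ζ_im : ζ.im = Real.sqrt 3 / 2 := rfl
private lemma ζ_sq : ζ ^ 2 = ζ - 1 := by
  apply Complex.ext <;>
    simp [pow_two, Complex.mul_re, Complex.mul_im, ζ_re, ζ_im] <;> nlinarith [sqrt3_mul]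
private lemma conj_ζ : (starRingEnd ℂ) ζ = 1 - ζ := by
  apply Complex.ext <;> simp [ζ_re, ζ_im]; ring
private lemma ζ_im_pos : 0 < ζ.im := by rw [ζ_im]; positivity
private lemma ζ_ne : ζ ≠ 0 := by
  intro h
  have h2 := ζ_im_pos
  rw [h] at h2
  simp at h2
private lemma one_sub_ζ_mul_ζ : (1 - ζ) * ζ = 1 := by linear_combination -ζ_sq
private lemma normSq_comb (x y : ℝ) :
    Complex.normSq ((x:ℂ) + (y:ℂ) * ζ) = x^2 + x*y + y^2 := by
  simp [Complex.normSq_apply, Complex.add_re, Complex.add_im, Complex.mul_re, Complex.mul_im,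
    ζ_re, ζ_im]
  nlinarith [sqrt3_mul]
private lemma coords_eq {x y x' y' : ℝ} (h : (x:ℂ) + y * ζ = (x':ℂ) + y' * ζ) :
    x = x' ∧ y = y' := by
  have him : y * ζ.im = y' * ζ.im := by
    have := congrArg Complex.im h
    simpa [Complex.add_im, Complex.mul_im, Complex.ofReal_im, Complex.ofReal_re] using this
  have hy : y = y' := mul_right_cancel₀ (ne_of_gt ζ_im_pos) him
  subst hy
  have hre : x + y * ζ.re = x' + y * ζ.re := by
    have := congrArg Complex.re h
    simpa [Complex.add_re, Complex.mul_re, Complex.ofReal_im, Complex.ofReal_re] using this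
  exact ⟨by linarith, rfl⟩
private lemma Emul (m n m' n' : ℤ) :
    ((m:ℂ) + n*ζ) * ((m':ℂ) + n'*ζ)
      = ((m*m' - n*n' : ℤ) : ℂ) + ((m*n' + n*m' + n*n' : ℤ) : ℂ)*ζ := by
  push_cast
  linear_combination (n*n' : ℂ) * ζ_sq

private lemma hζ3 : ζ^3 = -1 := by linear_combination (ζ + 1) * ζ_sq
private lemma Epow (j : ℕ) : ∃ p q : ℤ, (1-ζ)^j = (p:ℂ) + (q:ℂ)*ζ := by
  induction j with
  | zero => exact ⟨1, 0, by norm_num⟩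
  | succ n ih =>
    obtain ⟨p, q, hpq⟩ := ih
    refine ⟨p + q, -p, ?_⟩
    rw [pow_succ, hpq]
    push_cast
    linear_combination (-q : ℂ) * ζ_sq

set_option maxHeartbeats 2000000 in
/-- classification of discrete subgroups of ℂ invariant under the dihedral group of order 6 -/
private lemma planar_classification (P : Set ℂ)
    (h0 : (0:ℂ) ∈ P)
    (hsub : ∀ x ∈ P, ∀ y ∈ P, x - y ∈ P)
    (hrot : ∀ z ∈ P, (ζ - 1) * z ∈ P)
    (hconj : ∀ z ∈ P, (starRingEnd ℂ) z ∈ P)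
    (hfin : ∀ R : ℝ, {z ∈ P | ‖z‖ ≤ R}.Finite)
    (hne : ∃ z ∈ P, z ≠ 0) :
    ∃ a : ℝ, 0 < a ∧
      ((∀ z, z ∈ P ↔ ∃ m n : ℤ, z = (a:ℂ) * ((m:ℂ) + (n:ℂ)*ζ)) ∨
       (∀ z, z ∈ P ↔ ∃ m n : ℤ, z = (a:ℂ) * (((m:ℂ) + (n:ℂ)*ζ) * (2 - ζ)))) := by
  -- closure properties
  have hneg : ∀ x ∈ P, -x ∈ P := fun x hx => by simpa using hsub 0 h0 x hx
  have hadd : ∀ x ∈ P, ∀ y ∈ P, x + y ∈ P := fun x hx y hy => by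
    simpa using hsub x hx (-y) (hneg y hy)
  have hζP : ∀ z ∈ P, ζ * z ∈ P := by
    intro z hz
    have := hadd z hz _ (hrot z hz)
    have e : z + (ζ - 1) * z = ζ * z := by ring
    rwa [e] at this
  have hzint : ∀ k : ℤ, ∀ z ∈ P, (k:ℂ) * z ∈ P := by
    intro k z hz
    induction k using Int.induction_on with
    | zero => simpa using h0
    | succ n ih => push_cast; rw [add_mul, one_mul]; push_cast at ih; exact hadd _ ih _ hz
    | pred n ih =>
      have h := hsub _ ih z hz
      have e : ((-(n:ℤ) - 1 : ℤ):ℂ) * z = ((-(n:ℤ) : ℤ):ℂ) * z - z := by push_cast; ring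
      rw [e]; exact h
  have hE : ∀ (m n : ℤ), ∀ z ∈ P, ((m:ℂ) + (n:ℂ)*ζ) * z ∈ P := by
    intro m n z hz
    have h1 := hzint m z hz
    have h2 := hzint n _ (hζP z hz)
    have := hadd _ h1 _ h2
    have e : (m:ℂ)*z + (n:ℂ)*(ζ*z) = ((m:ℂ) + (n:ℂ)*ζ)*z := by ring
    rwa [e] at this
  have hζpow : ∀ (j : ℕ), ∀ z ∈ P, ζ^j * z ∈ P := by
    intro j
    induction j with
    | zero => intro z hz; simpa using hz
    | succ n ih =>
      intro z hz
      have := ih _ (hζP z hz)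
      have e : ζ^n * (ζ*z) = ζ^(n+1) * z := by ring
      rwa [e] at this
  -- minimal vector
  obtain ⟨z₀, hz₀P, hz₀⟩ := hne
  have hz₀abs : 0 < ‖z₀‖ := by simpa using hz₀
  set S : Set ℂ := {z ∈ P | z ≠ 0 ∧ ‖z‖ ≤ ‖z₀‖} with hS
  have hSfin : S.Finite := (hfin (‖z₀‖)).subset (by
    rintro z ⟨hzP, _, hz2⟩; exact ⟨hzP, hz2⟩)
  obtain ⟨v, hvS, hvmin'⟩ := Set.exists_min_image S (fun z : ℂ => ‖z‖) hSfin
    ⟨z₀, hz₀P, hz₀, le_refl _⟩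
  obtain ⟨hvP, hv0, hvle⟩ := hvS
  have hvmin : ∀ z ∈ P, z ≠ 0 → ‖v‖ ≤ ‖z‖ := by
    intro z hz hz0
    by_cases h : ‖z‖ ≤ ‖z₀‖
    · exact hvmin' z ⟨hz, hz0, h⟩
    · exact le_trans hvle (le_of_not_ge h)
  have hvabs : 0 < Complex.normSq v := by
    rwa [Complex.normSq_pos]
  -- generation by v and ζ v
  have hgen : ∀ w ∈ P, ∃ m n : ℤ, w = ((m:ℂ) + (n:ℂ)*ζ) * v := by
    intro w hw
    set t : ℂ := w / v with htdef
    set β : ℝ := t.im / ζ.im with hβ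
    set α : ℝ := t.re - β * ζ.re with hα
    have ht : t = (α:ℂ) + (β:ℂ) * ζ := by
      apply Complex.ext
      · simp [hα, Complex.add_re, Complex.mul_re, Complex.ofReal_re, Complex.ofReal_im]
      · have : β * ζ.im = t.im := div_mul_cancel₀ _ (ne_of_gt ζ_im_pos)
        simp [Complex.add_im, Complex.mul_im, Complex.ofReal_re, Complex.ofReal_im, this]
    have hwv : w = ((α:ℂ) + (β:ℂ) * ζ) * v := by
      rw [← ht, htdef, div_mul_cancel₀ _ hv0]
    set m : ℤ := round α with hm
    set n : ℤ := round β with hn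
    refine ⟨m, n, ?_⟩
    set r : ℂ := w - ((m:ℂ) + (n:ℂ)*ζ)*v with hr
    have hrP : r ∈ P := hsub w hw _ (hE m n v hvP)
    have hre : r = (((α - m : ℝ):ℂ) + ((β - n : ℝ):ℂ)*ζ)*v := by
      rw [hr, hwv]; push_cast; ring
    have hrns : Complex.normSq r
        = ((α-m)^2 + (α-m)*(β-n) + (β-n)^2) * Complex.normSq v := by
      rw [hre, Complex.normSq_mul, normSq_comb]
    have habs1 : |α - (m:ℝ)| ≤ 1/2 := abs_sub_round α
    have habs2 : |β - (n:ℝ)| ≤ 1/2 := abs_sub_round β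
    have hsq1 : (α - m)^2 ≤ 1/4 := by
      have h' := abs_le.mp habs1
      nlinarith [h'.1, h'.2]
    have hsq2 : (β - n)^2 ≤ 1/4 := by
      have h' := abs_le.mp habs2
      nlinarith [h'.1, h'.2]
    have hbound : Complex.normSq r ≤ 3/4 * Complex.normSq v := by
      rw [hrns]
      have : (α-m)^2 + (α-m)*(β-n) + (β-n)^2 ≤ 3/4 := by nlinarith [sq_nonneg ((α-m)+(β-n))]
      nlinarith [hvabs]
    have hrz : r = 0 := by
      by_contra hr0
      have h1 : ‖v‖ ≤ ‖r‖ := hvmin r hrP hr0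
      have h2 : Complex.normSq v ≤ Complex.normSq r := by
        rw [← Complex.sq_norm, ← Complex.sq_norm]
        nlinarith [norm_nonneg v, norm_nonneg r]
      nlinarith
    rw [hr] at hrz
    exact sub_eq_zero.mp hrz
  -- conj v is a unit times v
  obtain ⟨m₀, n₀, hconjv⟩ := hgen _ (hconj v hvP)
  have hns1 : Complex.normSq ((m₀:ℂ) + (n₀:ℂ)*ζ) = 1 := by
    have h1 : Complex.normSq ((m₀:ℂ)+(n₀:ℂ)*ζ) * Complex.normSq v = Complex.normSq v := by
      rw [← Complex.normSq_mul, ← hconjv, Complex.normSq_conj]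
    have := hvabs
    nlinarith [h1]
  have hZ : m₀^2 + m₀*n₀ + n₀^2 = 1 := by
    have : ((m₀:ℝ))^2 + (m₀:ℝ)*(n₀:ℝ) + (n₀:ℝ)^2 = 1 := by
      rw [← hns1]
      have : ((m₀:ℂ) + (n₀:ℂ)*ζ) = (((m₀:ℝ)):ℂ) + (((n₀:ℝ)):ℂ)*ζ := by push_cast; ring
      rw [this, normSq_comb]
    exact_mod_cast this
  have hcase : ∃ j : ℕ, j ≤ 5 ∧ (m₀:ℂ) + (n₀:ℂ)*ζ = ζ^j := by
    have hm1 : -1 ≤ m₀ := by nlinarith [sq_nonneg (m₀+n₀), sq_nonneg n₀, sq_nonneg (m₀-1), sq_nonneg (m₀+1)]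
    have hm2 : m₀ ≤ 1 := by nlinarith [sq_nonneg (m₀+n₀), sq_nonneg n₀, sq_nonneg (m₀-1), sq_nonneg (m₀+1)]
    have hn1 : -1 ≤ n₀ := by nlinarith [sq_nonneg (m₀+n₀), sq_nonneg m₀, sq_nonneg (n₀-1), sq_nonneg (n₀+1)]
    have hn2 : n₀ ≤ 1 := by nlinarith [sq_nonneg (m₀+n₀), sq_nonneg m₀, sq_nonneg (n₀-1), sq_nonneg (n₀+1)]
    interval_cases m₀ <;> interval_cases n₀
    · exact absurd hZ (by norm_num)
    · exact ⟨3, by norm_num, by rw [hζ3]; push_cast; ring⟩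
    · exact ⟨2, by norm_num, by rw [ζ_sq]; push_cast; ring⟩
    · exact ⟨4, by norm_num, by rw [show (4:ℕ) = 3 + 1 from rfl, pow_add, hζ3]; push_cast; ring⟩
    · exact absurd hZ (by norm_num)
    · exact ⟨1, by norm_num, by push_cast; ring⟩
    · exact ⟨5, by norm_num, by rw [show (5:ℕ) = 3 + 2 from rfl, pow_add, hζ3, ζ_sq]; push_cast; ring⟩
    · exact ⟨0, by norm_num, by push_cast; ring⟩
    · exact absurd hZ (by norm_num)
  obtain ⟨j, hj5, hjeq⟩ := hcase
  rcases Nat.even_or_odd j with ⟨j', hj'⟩ | ⟨j', hj'⟩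
  · -- even case : triangular lattice
    set w : ℂ := ζ^j' * v with hwdef
    have hwP : w ∈ P := hζpow j' v hvP
    have hw0 : w ≠ 0 := mul_ne_zero (pow_ne_zero _ ζ_ne) hv0
    have hconjv' : (starRingEnd ℂ) v = ζ^(j'+j') * v := by rw [hconjv, hjeq, hj']
    have hkey : (1-ζ)^j' * ζ^(j'+j') = ζ^j' := by
      calc (1-ζ)^j' * ζ^(j'+j') = ((1-ζ)*ζ)^j' * ζ^j' := by rw [mul_pow, pow_add]; ring
      _ = ζ^j' := by rw [one_sub_ζ_mul_ζ, one_pow, one_mul]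
    have hconjw : (starRingEnd ℂ) w = w := by
      rw [hwdef, map_mul, map_pow, conj_ζ, hconjv', ← mul_assoc, hkey]
    have hwre : ((w.re : ℝ):ℂ) = w := Complex.conj_eq_iff_re.mp hconjw
    have hvw : v = (1-ζ)^j' * w := by
      rw [hwdef]
      calc v = ((1-ζ)*ζ)^j' * v := by rw [one_sub_ζ_mul_ζ, one_pow, one_mul]
      _ = (1-ζ)^j' * (ζ^j' * v) := by rw [mul_pow]; ring
    set s : ℝ := w.re with hsdef
    have hs0 : s ≠ 0 := by
      intro h
      apply hw0
      rw [← hwre, h]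
      norm_num
    have hmain : ∀ z, z ∈ P ↔ ∃ m n : ℤ, z = (s:ℂ) * ((m:ℂ) + (n:ℂ)*ζ) := by
      intro z
      constructor
      · intro hz
        obtain ⟨m, n, hz'⟩ := hgen z hz
        obtain ⟨p, q, hpq⟩ := Epow j'
        refine ⟨m*p - n*q, m*q + n*p + n*q, ?_⟩
        rw [hz', hvw, hpq, ← hwre]
        push_cast
        linear_combination ((s:ℂ)*(n:ℂ)*(q:ℂ)) * ζ_sq
      · rintro ⟨m, n, rfl⟩
        have h' := hE m n w hwP
        rw [← hwre, mul_comm] at h'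
        exact h'
    rcases abs_cases s with ⟨hs1, hs2⟩ | ⟨hs1, hs2⟩
    · refine ⟨|s|, abs_pos.mpr hs0, Or.inl ?_⟩
      rw [hs1]
      exact hmain
    · refine ⟨|s|, abs_pos.mpr hs0, Or.inl ?_⟩
      intro z
      rw [hmain z, hs1]
      constructor
      · rintro ⟨m, n, rfl⟩
        exact ⟨-m, -n, by push_cast; ring⟩
      · rintro ⟨m, n, rfl⟩
        exact ⟨-m, -n, by push_cast; ring⟩
  · -- odd case : centred lattice
    set w : ℂ := ζ^j' * v with hwdef
    have hwP : w ∈ P := hζpow j' v hvP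
    have hw0 : w ≠ 0 := mul_ne_zero (pow_ne_zero _ ζ_ne) hv0
    have hconjv' : (starRingEnd ℂ) v = ζ^(2*j'+1) * v := by rw [hconjv, hjeq, hj']
    have hkey : (1-ζ)^j' * ζ^(2*j'+1) = ζ^(j'+1) := by
      have : (1-ζ)^j' * ζ^(2*j'+1) = ((1-ζ)*ζ)^j' * ζ^(j'+1) := by
        rw [mul_pow, show 2*j'+1 = j' + (j'+1) by omega, pow_add]; ring
      rw [this, one_sub_ζ_mul_ζ, one_pow, one_mul]
    have hconjw : (starRingEnd ℂ) w = ζ * w := by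
      rw [hwdef, map_mul, map_pow, conj_ζ, hconjv', ← mul_assoc, hkey, pow_succ]
      ring
    -- derive w.re = -√3 * w.im
    have hrel : w.re = -(Real.sqrt 3) * w.im := by
      have hre := congrArg Complex.re hconjw
      simp [Complex.conj_re, Complex.mul_re, ζ_re, ζ_im] at hre
      linarith
    set r : ℝ := 2 * w.re / 3 with hrdef
    have hwr : w = (r:ℂ) * (2 - ζ) := by
      apply Complex.ext
      · simp [Complex.mul_re, Complex.sub_re, Complex.sub_im, Complex.ofReal_re,
          Complex.ofReal_im, ζ_re, ζ_im, hrdef]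
        ring
      · simp [Complex.mul_im, Complex.sub_re, Complex.sub_im, Complex.ofReal_re,
          Complex.ofReal_im, ζ_re, ζ_im, hrdef]
        linear_combination (Real.sqrt 3 / 3) * hrel + (-(w.im)/3) * sqrt3_mul
    have hr0 : r ≠ 0 := by
      intro h
      apply hw0
      rw [hwr, h]
      norm_num
    have hvw : v = (1-ζ)^j' * w := by
      rw [hwdef]
      calc v = ((1-ζ)*ζ)^j' * v := by rw [one_sub_ζ_mul_ζ, one_pow, one_mul]
      _ = (1-ζ)^j' * (ζ^j' * v) := by rw [mul_pow]; ring
    have hmain : ∀ z, z ∈ P ↔ ∃ m n : ℤ, z = (r:ℂ) * (((m:ℂ) + (n:ℂ)*ζ) * (2-ζ)) := by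
      intro z
      constructor
      · intro hz
        obtain ⟨m, n, hz'⟩ := hgen z hz
        obtain ⟨p, q, hpq⟩ := Epow j'
        refine ⟨m*p - n*q, m*q + n*p + n*q, ?_⟩
        rw [hz', hvw, hpq, hwr]
        push_cast
        linear_combination ((r:ℂ)*(n:ℂ)*(q:ℂ)*(2-ζ)) * ζ_sq
      · rintro ⟨m, n, rfl⟩
        have h' := hE m n w hwP
        rw [hwr] at h'
        have e : ((m:ℂ) + (n:ℂ)*ζ) * ((r:ℂ) * (2-ζ)) = (r:ℂ) * (((m:ℂ) + (n:ℂ)*ζ) * (2-ζ)) := by ring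
        rwa [e] at h'
    rcases abs_cases r with ⟨hs1, hs2⟩ | ⟨hs1, hs2⟩
    · refine ⟨|r|, abs_pos.mpr hr0, Or.inr ?_⟩
      rw [hs1]
      exact hmain
    · refine ⟨|r|, abs_pos.mpr hr0, Or.inr ?_⟩
      intro z
      rw [hmain z, hs1]
      constructor
      · rintro ⟨m, n, rfl⟩
        exact ⟨-m, -n, by push_cast; ring⟩
      · rintro ⟨m, n, rfl⟩
        exact ⟨-m, -n, by push_cast; ring⟩



private lemma latticeBallFinite (b : Module.Basis (Fin 3) ℝ V3) (R : ℝ) :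
    {x : V3 | (∃ c : Fin 3 → ℤ, x = ∑ i, (c i : ℝ) • b i) ∧ ‖x‖ ≤ R}.Finite := by
  set f : Fin 3 → (V3 →L[ℝ] ℝ) := fun i => LinearMap.toContinuousLinearMap (b.coord i) with hf
  set K : Fin 3 → ℤ := fun i => ⌈‖f i‖ * R⌉ with hK
  have hsub : {x : V3 | (∃ c : Fin 3 → ℤ, x = ∑ i, (c i : ℝ) • b i) ∧ ‖x‖ ≤ R} ⊆
      (fun c : Fin 3 → ℤ => ∑ i, (c i : ℝ) • b i) ''
        (Set.pi Set.univ (fun i => Set.Icc (-(K i)) (K i))) := by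
    rintro x ⟨⟨c, rfl⟩, hxR⟩
    refine ⟨c, ?_, rfl⟩
    intro i _
    have hco : (b.coord i) (∑ j, (c j : ℝ) • b j) = (c i : ℝ) := by
      rw [Module.Basis.coord_apply]
      exact congrFun (b.repr_sum_self _) i
    have hb : |(c i : ℝ)| ≤ ‖f i‖ * R := by
      rw [← hco]
      calc |(b.coord i) (∑ j, (c j : ℝ) • b j)| = ‖f i (∑ j, (c j : ℝ) • b j)‖ := rfl
        _ ≤ ‖f i‖ * ‖∑ j, (c j : ℝ) • b j‖ := (f i).le_opNorm _
        _ ≤ ‖f i‖ * R := mul_le_mul_of_nonneg_left hxR (norm_nonneg _)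
    have : |(c i : ℝ)| ≤ (K i : ℝ) := hb.trans (Int.le_ceil _)
    rw [← Int.cast_abs, Int.cast_le] at this
    rw [Set.mem_Icc]
    exact abs_le.mp this
  exact Set.Finite.subset (Set.Finite.image _ (Set.Finite.pi (fun i => Set.finite_Icc _ _))) hsub

/-- A subgroup-like subset of ℝ which is discrete and nontrivial is cyclic. -/
private lemma cyclic_of_discrete (A : Set ℝ) (h0 : (0:ℝ) ∈ A)
    (hsub : ∀ x ∈ A, ∀ y ∈ A, x - y ∈ A)
    (hfin : ∀ R : ℝ, {t ∈ A | |t| ≤ R}.Finite)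
    (hne : ∃ t ∈ A, t ≠ 0) :
    ∃ g > 0, ∀ t, t ∈ A ↔ ∃ k : ℤ, t = k * g := by
  obtain ⟨t₀, ht₀A, ht₀⟩ := hne
  have hneg : ∀ x ∈ A, -x ∈ A := fun x hx => by simpa using hsub 0 h0 x hx
  have hadd : ∀ x ∈ A, ∀ y ∈ A, x + y ∈ A := fun x hx y hy => by
    simpa using hsub x hx (-y) (hneg y hy)
  have hzmul : ∀ k : ℤ, ∀ x ∈ A, (k : ℝ) * x ∈ A := by
    intro k x hx
    induction k using Int.induction_on with
    | zero => simpa using h0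
    | succ n ih => push_cast; rw [add_mul, one_mul]; exact hadd _ ih _ hx
    | pred n ih =>
      have h := hsub _ ih x hx
      have e : ((-(n:ℤ) - 1 : ℤ):ℝ) * x = ((-(n:ℤ) : ℤ):ℝ) * x - x := by push_cast; ring
      rw [e]; exact h
  have habs : |t₀| ∈ A := by
    rcases abs_cases t₀ with ⟨h, _⟩ | ⟨h, _⟩
    · rw [h]; exact ht₀A
    · rw [h]; exact hneg _ ht₀A
  have habs_pos : 0 < |t₀| := abs_pos.mpr ht₀
  -- minimal positive element
  set S : Set ℝ := {t ∈ A | 0 < t ∧ t ≤ |t₀|} with hS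
  have hSfin : S.Finite := (hfin |t₀|).subset (by
    rintro t ⟨htA, ht1, ht2⟩; exact ⟨htA, by rw [abs_of_pos ht1]; exact ht2⟩)
  have hSne : S.Nonempty := ⟨|t₀|, habs, habs_pos, le_refl _⟩
  obtain ⟨g, hgS, hgmin⟩ := Set.exists_min_image S id hSfin hSne
  obtain ⟨hgA, hgpos, hgle⟩ := hgS
  refine ⟨g, hgpos, fun t => ⟨fun htA => ?_, ?_⟩⟩
  · refine ⟨⌊t / g⌋, ?_⟩
    set r : ℝ := t - ⌊t / g⌋ * g with hr
    have hrA : r ∈ A := hsub t htA _ (hzmul _ g hgA)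
    have hfl : (⌊t / g⌋ : ℝ) * g ≤ t := (le_div_iff₀ hgpos).mp (Int.floor_le (t / g))
    have hfu : t < ((⌊t / g⌋ : ℝ) + 1) * g := (div_lt_iff₀ hgpos).mp (Int.lt_floor_add_one (t / g))
    have hr0 : 0 ≤ r := by rw [hr]; linarith
    have hrlt : r < g := by rw [hr]; nlinarith
    rcases eq_or_lt_of_le hr0 with h | h
    · rw [hr] at h; linarith [h.symm ▸ (rfl : (0:ℝ) = 0)]
    · exfalso
      have : g ≤ r := hgmin r ⟨hrA, h, le_trans hrlt.le hgle⟩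
      linarith
  · rintro ⟨k, rfl⟩
    exact hzmul k g hgA

private def toC (v : V3) : ℂ := ⟨v 0, v 1⟩

private lemma toC_sub (v w : V3) : toC (v - w) = toC v - toC w := rfl

private lemma toC_add (v w : V3) : toC (v + w) = toC v + toC w := rfl

private lemma two_sub_ζ_ne : (2 - ζ) ≠ 0 := by
  intro h
  have h2 : (2 - ζ).im = 0 := by rw [h, Complex.zero_im]
  have h3 : (2 - ζ).im = -ζ.im := by simp [Complex.sub_im]
  have h4 := ζ_im_pos
  rw [h3] at h2
  linarith


private lemma aE_re (a : ℝ) (m n : ℤ) :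
    ((a:ℂ) * ((m:ℂ) + (n:ℂ)*ζ)).re = a * ((m:ℝ) + (n:ℝ) * (1/2)) := by
  simp [Complex.mul_re, Complex.add_re, Complex.add_im, Complex.mul_im, ζ_re, ζ_im]
  try ring

private lemma aE_im (a : ℝ) (m n : ℤ) :
    ((a:ℂ) * ((m:ℂ) + (n:ℂ)*ζ)).im = a * ((n:ℝ) * (Real.sqrt 3/2)) := by
  simp [Complex.mul_re, Complex.add_re, Complex.add_im, Complex.mul_im, ζ_re, ζ_im]
  try ring

private lemma Ec_form (m n : ℤ) :
    ((m:ℂ) + (n:ℂ)*ζ) * (2 - ζ) = ((2*m+n : ℤ):ℂ) + ((n-m : ℤ):ℂ)*ζ := by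
  push_cast
  linear_combination (-(n:ℂ)) * ζ_sq

private lemma h3val : (2 - ζ) * (1 + ζ) = 3 := by linear_combination (-1 : ℂ) * ζ_sq

set_option maxHeartbeats 1000000 in
private lemma centred_finish (L : AddSubgroup V3) (a b : ℝ) (ha : 0 < a) (hb : 0 < b)
    (T w' : V3) (hT2 : T 2 = 1) (hw'L : w' ∈ L)
    (hw'C : toC w' = (a:ℂ) * toC T) (hw'2 : w' 2 = b)
    (hzdec : ∀ v, v ∈ L → ∃ k : ℤ, v 2 = k * b)
    (hP : ∀ z : ℂ, (∃ v, v ∈ L ∧ v 2 = 0 ∧ toC v = z) ↔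
      ∃ m n : ℤ, z = (a:ℂ) * (((m:ℂ)+(n:ℂ)*ζ)*(2-ζ))) :
    (fun x : V3 => ![a * x 0, a * x 1, b * x 2]) ⁻¹' (L : Set V3)
      = {x | ∃ m n k : ℤ, x = m • (u₁ + u₂) + n • ((2:ℤ) • u₁ - u₂) + k • T} := by
  have hw'0 : w' 0 = a * T 0 := by
    have h := congrArg Complex.re hw'C
    simpa [Complex.mul_re, Complex.ofReal_re, Complex.ofReal_im, toC] using h
  have hw'1 : w' 1 = a * T 1 := by
    have h := congrArg Complex.im hw'C
    simpa [Complex.mul_im, Complex.ofReal_re, Complex.ofReal_im, toC] using h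
  have hG10 : (u₁ + u₂) 0 = 3/2 := by
    show u₁ 0 + u₂ 0 = 3/2
    rw [show u₁ 0 = 1 from rfl, show u₂ 0 = 1/2 from rfl]
    norm_num
  have hG11 : (u₁ + u₂) 1 = Real.sqrt 3/2 := by
    show u₁ 1 + u₂ 1 = Real.sqrt 3/2
    rw [show u₁ 1 = 0 from rfl, show u₂ 1 = Real.sqrt 3/2 from rfl]
    norm_num
  have hG12 : (u₁ + u₂) 2 = 0 := by
    show u₁ 2 + u₂ 2 = 0
    rw [show u₁ 2 = 0 from rfl, show u₂ 2 = 0 from rfl]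
    norm_num
  have hG20 : ((2:ℤ) • u₁ - u₂) 0 = 3/2 := by
    show (2:ℤ) • u₁ 0 - u₂ 0 = 3/2
    rw [zsmul_eq_mul, show u₁ 0 = 1 from rfl, show u₂ 0 = 1/2 from rfl]
    norm_num
  have hG21 : ((2:ℤ) • u₁ - u₂) 1 = -(Real.sqrt 3/2) := by
    show (2:ℤ) • u₁ 1 - u₂ 1 = -(Real.sqrt 3/2)
    rw [zsmul_eq_mul, show u₁ 1 = 0 from rfl, show u₂ 1 = Real.sqrt 3/2 from rfl]
    norm_num
  have hG22 : ((2:ℤ) • u₁ - u₂) 2 = 0 := by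
    show (2:ℤ) • u₁ 2 - u₂ 2 = 0
    rw [zsmul_eq_mul, show u₁ 2 = 0 from rfl, show u₂ 2 = 0 from rfl]
    norm_num
  ext x
  simp only [Set.mem_preimage, SetLike.mem_coe, Set.mem_setOf_eq]
  constructor
  · intro hx
    obtain ⟨k, hk⟩ := hzdec _ hx
    rw [show (![a * x 0, a * x 1, b * x 2]) 2 = b * x 2 from rfl] at hk
    have hx2 : x 2 = (k:ℝ) := by
      have h' : x 2 * b = (k:ℝ) * b := by linarith [hk]
      exact mul_right_cancel₀ (ne_of_gt hb) h'
    have hv'L : ![a * x 0, a * x 1, b * x 2] - k • w' ∈ L :=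
      L.sub_mem hx (AddSubgroup.zsmul_mem L hw'L k)
    have hv'2 : (![a * x 0, a * x 1, b * x 2] - k • w') 2 = 0 := by
      show b * x 2 - k • (w' 2) = 0
      rw [hw'2, zsmul_eq_mul, hx2]
      ring
    obtain ⟨mm, nn, hmmnn⟩ := (hP _).mp ⟨_, hv'L, hv'2, rfl⟩
    rw [Ec_form] at hmmnn
    have hre := congrArg Complex.re hmmnn
    have him := congrArg Complex.im hmmnn
    rw [aE_re] at hre
    rw [aE_im] at him
    have hre' : a * x 0 - (k:ℝ) * (a * T 0)
        = a * (((2*mm+nn:ℤ):ℝ) + ((nn-mm:ℤ):ℝ)*(1/2)) := by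
      rw [← hre]
      show a * x 0 - (k:ℝ) * (a * T 0) = a * x 0 - k • (w' 0)
      rw [hw'0, zsmul_eq_mul]
    have him' : a * x 1 - (k:ℝ) * (a * T 1)
        = a * (((nn-mm:ℤ):ℝ)*(Real.sqrt 3/2)) := by
      rw [← him]
      show a * x 1 - (k:ℝ) * (a * T 1) = a * x 1 - k • (w' 1)
      rw [hw'1, zsmul_eq_mul]
    have hx0 : x 0 = ((2*mm+nn:ℤ):ℝ) + ((nn-mm:ℤ):ℝ)*(1/2) + (k:ℝ) * T 0 := by
      apply mul_left_cancel₀ (ne_of_gt ha)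
      linear_combination hre'
    have hx1 : x 1 = ((nn-mm:ℤ):ℝ)*(Real.sqrt 3/2) + (k:ℝ) * T 1 := by
      apply mul_left_cancel₀ (ne_of_gt ha)
      linear_combination him'
    refine ⟨nn, mm, k, ?_⟩
    funext i
    fin_cases i
    · show x 0 = nn • ((u₁ + u₂) 0) + mm • (((2:ℤ) • u₁ - u₂) 0) + k • (T 0)
      rw [hG10, hG20, zsmul_eq_mul, zsmul_eq_mul, zsmul_eq_mul, hx0]
      push_cast
      ring
    · show x 1 = nn • ((u₁ + u₂) 1) + mm • (((2:ℤ) • u₁ - u₂) 1) + k • (T 1)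
      rw [hG11, hG21, zsmul_eq_mul, zsmul_eq_mul, zsmul_eq_mul, hx1]
      push_cast
      ring
    · show x 2 = nn • ((u₁ + u₂) 2) + mm • (((2:ℤ) • u₁ - u₂) 2) + k • (T 2)
      rw [hG12, hG22, hT2, zsmul_eq_mul, zsmul_eq_mul, zsmul_eq_mul, hx2]
      push_cast
      ring
  · rintro ⟨mm, nn, k, rfl⟩
    obtain ⟨u', hu'L, hu'2, hu'C⟩ :
        ∃ u', u' ∈ L ∧ u' 2 = 0 ∧ toC u' = (a:ℂ) * (((nn:ℂ) + (mm:ℂ)*ζ) * (2-ζ)) :=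
      (hP _).mpr ⟨nn, mm, rfl⟩
    rw [Ec_form] at hu'C
    set y : V3 := mm • (u₁ + u₂) + nn • ((2:ℤ) • u₁ - u₂) + k • T with hy
    have hu'0 : u' 0 = a * (((2*nn+mm:ℤ):ℝ) + ((mm-nn:ℤ):ℝ)*(1/2)) := by
      have h := congrArg Complex.re hu'C
      rw [aE_re] at h
      exact h
    have hu'1 : u' 1 = a * (((mm-nn:ℤ):ℝ)*(Real.sqrt 3/2)) := by
      have h := congrArg Complex.im hu'C
      rw [aE_im] at h
      exact h
    have he : ![a * y 0, a * y 1, b * y 2] = u' + k • w' := by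
      funext i
      fin_cases i
      · show a * y 0 = u' 0 + k • (w' 0)
        rw [hu'0, hw'0, zsmul_eq_mul, hy]
        show a * (mm • ((u₁ + u₂) 0) + nn • (((2:ℤ) • u₁ - u₂) 0) + k • (T 0)) = _
        rw [hG10, hG20, zsmul_eq_mul, zsmul_eq_mul, zsmul_eq_mul]
        push_cast
        ring
      · show a * y 1 = u' 1 + k • (w' 1)
        rw [hu'1, hw'1, zsmul_eq_mul, hy]
        show a * (mm • ((u₁ + u₂) 1) + nn • (((2:ℤ) • u₁ - u₂) 1) + k • (T 1)) = _
        rw [hG11, hG21, zsmul_eq_mul, zsmul_eq_mul, zsmul_eq_mul]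
        push_cast
        ring
      · show b * y 2 = u' 2 + k • (w' 2)
        rw [hu'2, hw'2, zsmul_eq_mul, hy]
        show b * (mm • ((u₁ + u₂) 2) + nn • (((2:ℤ) • u₁ - u₂) 2) + k • (T 2)) = _
        rw [hG12, hG22, hT2, zsmul_eq_mul, zsmul_eq_mul, zsmul_eq_mul]
        push_cast
        ring
    show ![a * y 0, a * y 1, b * y 2] ∈ L
    rw [he]
    exact L.add_mem hu'L (AddSubgroup.zsmul_mem L hw'L k)

/-- A full-rank lattice in `ℝ³` preserved by the group `D̃₃` generated by
the reflections in the planes spanned by `u₁, e₃` and by `u₂, e₃` is the image under a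
diagonal map `D = diag(a, a, b)` (with `a, b > 0`) of one of four explicit lattices. -/
theorem statement14 (L : AddSubgroup V3) (hL : IsFullLattice L)
    (h₁ : reflPlaneU₁ '' (L : Set V3) = (L : Set V3))
    (h₂ : reflPlaneU₂ '' (L : Set V3) = (L : Set V3)) :
    ∃ a b : ℝ, 0 < a ∧ 0 < b ∧
      ((fun x : V3 => ![a * x 0, a * x 1, b * x 2]) ⁻¹' (L : Set V3)) ∈
        ({triLat, triCentredLat, triCentredLatU₁, triCentredLatU₂} : Set (Set V3)) := by
  classical
  obtain ⟨bb, hbb⟩ := hL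
  have hr₁ : ∀ v, v ∈ L → reflPlaneU₁ v ∈ L := by
    intro v hv
    have h : reflPlaneU₁ v ∈ reflPlaneU₁ '' (L : Set V3) := ⟨v, hv, rfl⟩
    rwa [h₁] at h
  have hr₂ : ∀ v, v ∈ L → reflPlaneU₂ v ∈ L := by
    intro v hv
    have h : reflPlaneU₂ v ∈ reflPlaneU₂ '' (L : Set V3) := ⟨v, hv, rfl⟩
    rwa [h₂] at h
  have hρ : ∀ v, v ∈ L → reflPlaneU₂ (reflPlaneU₁ v) ∈ L := fun v hv => hr₂ _ (hr₁ _ hv)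
  have hrotC : ∀ v : V3, toC (reflPlaneU₂ (reflPlaneU₁ v)) = (ζ - 1) * toC v := by
    intro v
    apply Complex.ext
    · simp [toC, reflPlaneU₁, reflPlaneU₂, Complex.mul_re, Complex.sub_re, Complex.sub_im,
        ζ_re, ζ_im, Complex.one_re, Complex.one_im]
      ring
    · simp [toC, reflPlaneU₁, reflPlaneU₂, Complex.mul_im, Complex.sub_re, Complex.sub_im,
        ζ_re, ζ_im, Complex.one_re, Complex.one_im]
      ring
  have hrot2 : ∀ v : V3, (reflPlaneU₂ (reflPlaneU₁ v)) 2 = v 2 := fun v => rfl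
  have hconjC : ∀ v : V3, toC (reflPlaneU₁ v) = (starRingEnd ℂ) (toC v) := by
    intro v
    apply Complex.ext <;> simp [toC, reflPlaneU₁]
  have hconj2 : ∀ v : V3, (reflPlaneU₁ v) 2 = v 2 := fun v => rfl
  have hLfin : ∀ R : ℝ, {x : V3 | x ∈ L ∧ ‖x‖ ≤ R}.Finite := by
    intro R
    refine (latticeBallFinite bb R).subset ?_
    rintro x ⟨hx, hxR⟩
    exact ⟨(hbb x).mp hx, hxR⟩
  have hbmem : ∀ i, bb i ∈ L := by
    intro i
    rw [hbb]
    refine ⟨fun j => if j = i then 1 else 0, ?_⟩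
    simp
  have hspan : ∀ x : V3, ∃ r : Fin 3 → ℝ, x = ∑ i, r i • bb i := by
    intro x
    exact ⟨fun i => bb.repr x i, (bb.sum_repr x).symm⟩
  have hplanar_ne : ∃ i, toC (bb i) ≠ 0 := by
    by_contra hno
    push_neg at hno
    obtain ⟨r, hr⟩ := hspan ![1, 0, 0]
    have h0 : ∀ i, bb i 0 = 0 := fun i => congrArg Complex.re (hno i)
    have h := congrFun hr 0
    simp [Finset.sum_apply, h0] at h
  have hvert_ne : ∃ i, bb i 2 ≠ 0 := by
    by_contra hno
    push_neg at hno
    obtain ⟨r, hr⟩ := hspan ![0, 0, 1]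
    have h := congrFun hr 2
    simp [Finset.sum_apply, hno] at h
  -- the planar lattice
  set P : Set ℂ := {z | ∃ v, v ∈ L ∧ v 2 = 0 ∧ toC v = z} with hPdef
  have hP0 : (0:ℂ) ∈ P := ⟨0, L.zero_mem, rfl, rfl⟩
  have hPsub : ∀ x ∈ P, ∀ y ∈ P, x - y ∈ P := by
    rintro x ⟨v, hv, hv2, rfl⟩ y ⟨u, hu, hu2, rfl⟩
    refine ⟨v - u, L.sub_mem hv hu, ?_, toC_sub v u⟩
    rw [show (v - u) 2 = v 2 - u 2 from rfl, hv2, hu2]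
    ring
  have hProt : ∀ z ∈ P, (ζ - 1) * z ∈ P := by
    rintro z ⟨v, hv, hv2, rfl⟩
    exact ⟨_, hρ v hv, by rw [hrot2 v]; exact hv2, hrotC v⟩
  have hPconj : ∀ z ∈ P, (starRingEnd ℂ) z ∈ P := by
    rintro z ⟨v, hv, hv2, rfl⟩
    exact ⟨_, hr₁ v hv, by rw [hconj2 v]; exact hv2, hconjC v⟩
  have hPfin : ∀ R : ℝ, {z ∈ P | ‖z‖ ≤ R}.Finite := by
    intro R
    rcases le_or_gt 0 R with hR | hR
    · refine ((hLfin R).image toC).subset ?_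
      rintro z ⟨⟨v, hv, hv2, rfl⟩, hzR⟩
      refine ⟨v, ⟨hv, ?_⟩, rfl⟩
      rw [pi_norm_le_iff_of_nonneg hR]
      intro i
      fin_cases i
      · exact le_trans (Complex.abs_re_le_norm (toC v)) hzR
      · exact le_trans (Complex.abs_im_le_norm (toC v)) hzR
      · rw [show v ⟨2, by norm_num⟩ = v 2 from rfl, hv2]
        simpa using hR
    · convert Set.finite_empty
      ext z
      simp only [Set.mem_setOf_eq, Set.mem_empty_iff_false, iff_false]
      rintro ⟨_, habs⟩
      exact absurd (le_trans (norm_nonneg z) habs) (not_le.mpr hR)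
  have hPne : ∃ z ∈ P, z ≠ 0 := by
    obtain ⟨i, hi⟩ := hplanar_ne
    refine ⟨toC (bb i - reflPlaneU₂ (reflPlaneU₁ (bb i))),
      ⟨_, L.sub_mem (hbmem i) (hρ _ (hbmem i)), ?_, rfl⟩, ?_⟩
    · rw [show (bb i - reflPlaneU₂ (reflPlaneU₁ (bb i))) 2
          = bb i 2 - (reflPlaneU₂ (reflPlaneU₁ (bb i))) 2 from rfl, hrot2]
      ring
    · rw [toC_sub, hrotC]
      rw [show toC (bb i) - (ζ - 1) * toC (bb i) = (2 - ζ) * toC (bb i) by ring]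
      exact mul_ne_zero two_sub_ζ_ne hi
  obtain ⟨a, ha, hPcase⟩ := planar_classification P hP0 hPsub hProt hPconj hPfin hPne
  -- the vertical structure
  set vert : ℝ → V3 := fun t => ![0, 0, t] with hvertdef
  have hvert2 : ∀ t, vert t 2 = t := fun t => rfl
  have hvert0 : vert 0 = 0 := by funext i; fin_cases i <;> rfl
  have hvertsub : ∀ s t, vert (s - t) = vert s - vert t := by
    intro s t; funext i; fin_cases i <;> simp [hvertdef]
  have hvert_inj : Function.Injective vert := by
    intro s t h
    have h2 := congrFun h 2
    simpa [hvertdef] using h2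
  have htriple : ∀ v, v ∈ L → vert (3 * v 2) ∈ L := by
    intro v hv
    have hmem : v + reflPlaneU₂ (reflPlaneU₁ v)
        + reflPlaneU₂ (reflPlaneU₁ (reflPlaneU₂ (reflPlaneU₁ v))) ∈ L :=
      L.add_mem (L.add_mem hv (hρ v hv)) (hρ _ (hρ v hv))
    set big := v + reflPlaneU₂ (reflPlaneU₁ v)
        + reflPlaneU₂ (reflPlaneU₁ (reflPlaneU₂ (reflPlaneU₁ v))) with hbig
    have hsum : toC big = 0 := by
      rw [hbig, toC_add, toC_add, hrotC, hrotC, hrotC]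
      linear_combination (toC v) * ζ_sq
    have h0 : big 0 = 0 := congrArg Complex.re hsum
    have h1 : big 1 = 0 := congrArg Complex.im hsum
    have h2 : big 2 = 3 * v 2 := by
      rw [hbig, show (v + reflPlaneU₂ (reflPlaneU₁ v)
        + reflPlaneU₂ (reflPlaneU₁ (reflPlaneU₂ (reflPlaneU₁ v)))) 2
        = v 2 + (reflPlaneU₂ (reflPlaneU₁ v)) 2
          + (reflPlaneU₂ (reflPlaneU₁ (reflPlaneU₂ (reflPlaneU₁ v)))) 2 from rfl,
        hrot2, hrot2, hrot2]
      ring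
    have he : vert (3 * v 2) = big := by
      funext i
      fin_cases i
      · exact h0.symm
      · exact h1.symm
      · exact h2.symm
    rw [he]
    exact hmem
  obtain ⟨g, hg, hA⟩ := cyclic_of_discrete {t | vert t ∈ L}
    (by rw [Set.mem_setOf_eq, hvert0]; exact L.zero_mem)
    (fun x hx y hy => by rw [Set.mem_setOf_eq, hvertsub]; exact L.sub_mem hx hy)
    (by
      intro R
      refine Set.Finite.subset (Set.Finite.preimage hvert_inj.injOn (hLfin R)) ?_
      rintro t ⟨ht, htR⟩
      refine ⟨ht, ?_⟩
      rw [pi_norm_le_iff_of_nonneg (le_trans (abs_nonneg t) htR)]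
      intro i
      fin_cases i
      · simpa [hvertdef] using le_trans (abs_nonneg t) htR
      · simpa [hvertdef] using le_trans (abs_nonneg t) htR
      · simpa [hvertdef] using htR)
    (by
      obtain ⟨i, hi⟩ := hvert_ne
      exact ⟨3 * bb i 2, htriple _ (hbmem i), by simpa using hi⟩)
  obtain ⟨b, hb, hZc⟩ := cyclic_of_discrete {t | ∃ v, v ∈ L ∧ v 2 = t}
    ⟨0, L.zero_mem, rfl⟩
    (by
      rintro x ⟨v, hv, rfl⟩ y ⟨u, hu, rfl⟩
      exact ⟨v - u, L.sub_mem hv hu, rfl⟩)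
    (by
      intro R
      set K : ℤ := ⌈3 * R / g⌉ with hK
      refine Set.Finite.subset (Set.Finite.image (fun k : ℤ => (k : ℝ) * g / 3)
        (Set.finite_Icc (-K) K)) ?_
      rintro t ⟨⟨v, hv, rfl⟩, htR⟩
      obtain ⟨k, hk⟩ := (hA (3 * v 2)).mp (htriple v hv)
      refine ⟨k, ?_, by rw [div_eq_iff (by norm_num : (3:ℝ) ≠ 0)]; linarith [hk]⟩
      rw [Set.mem_Icc]
      have hkabs : |(k:ℝ)| * g ≤ 3 * R := by
        have : |(k:ℝ) * g| = |3 * v 2| := (congrArg (fun x : ℝ => |x|) hk).symm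
        rw [abs_mul, abs_of_pos hg] at this
        have h3 : |3 * v 2| ≤ 3 * R := by
          rw [abs_mul]
          simp only [abs_of_pos (by norm_num : (0:ℝ) < 3)]
          nlinarith [htR]
        linarith [this ▸ h3]
      have hkle : |(k:ℝ)| ≤ 3 * R / g := by
        rw [le_div_iff₀ hg]
        exact hkabs
      have : |(k:ℝ)| ≤ (K:ℝ) := le_trans hkle (Int.le_ceil _)
      rw [← Int.cast_abs, Int.cast_le] at this
      exact abs_le.mp this)
    ⟨g, ⟨vert g, (hA g).mpr ⟨1, by push_cast; ring⟩, rfl⟩, ne_of_gt hg⟩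
  obtain ⟨w₀, hw₀L, hw₀2⟩ : ∃ w, w ∈ L ∧ w 2 = b := by
    obtain ⟨v, hv, hv2⟩ := (hZc b).mpr ⟨1, by push_cast; ring⟩
    exact ⟨v, hv, hv2⟩
  have hzdec : ∀ v, v ∈ L → ∃ k : ℤ, v 2 = k * b := fun v hv => (hZc (v 2)).mp ⟨v, hv, rfl⟩
  -- congruence conditions on the planar part of w₀
  have hc1 : (2 - ζ) * toC w₀ ∈ P := by
    refine ⟨w₀ - reflPlaneU₂ (reflPlaneU₁ w₀), L.sub_mem hw₀L (hρ _ hw₀L), ?_, ?_⟩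
    · rw [show (w₀ - reflPlaneU₂ (reflPlaneU₁ w₀)) 2
          = w₀ 2 - (reflPlaneU₂ (reflPlaneU₁ w₀)) 2 from rfl, hrot2]
      ring
    · rw [toC_sub, hrotC]; ring
  have hc2 : (starRingEnd ℂ) (toC w₀) - toC w₀ ∈ P := by
    refine ⟨reflPlaneU₁ w₀ - w₀, L.sub_mem (hr₁ _ hw₀L) hw₀L, ?_, ?_⟩
    · rw [show (reflPlaneU₁ w₀ - w₀) 2 = (reflPlaneU₁ w₀) 2 - w₀ 2 from rfl, hconj2]
      ring
    · rw [toC_sub, hconjC]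
  rcases hPcase with hPE | hPEc
  · -- triangular case
    obtain ⟨m, n, hmn⟩ := (hPE _).mp hc1
    have hane : (a:ℂ) ≠ 0 := by
      simp only [ne_eq, Complex.ofReal_eq_zero]
      exact ne_of_gt ha
    have hp : (3:ℂ) * toC w₀ = (a:ℂ) * ((m:ℂ) + (n:ℂ)*ζ) * (1+ζ) := by
      linear_combination (1+ζ) * hmn + (toC w₀) * ζ_sq
    obtain ⟨m', n', hm'n'⟩ := (hPE _).mp hc2
    -- conj p - p = a (m'+n'ζ) forces 3 ∣ m + 2n
    have hEq : ((((m:ℝ)+2*(n:ℝ))/3 : ℝ):ℂ) + ((-2*((m:ℝ)+2*(n:ℝ))/3 : ℝ):ℂ) * ζ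
        = ((m':ℝ):ℂ) + ((n':ℝ):ℂ) * ζ := by
      apply mul_left_cancel₀ hane
      have hcd : (3:ℂ) * (starRingEnd ℂ) (toC w₀)
          = (a:ℂ) * ((m:ℂ) + (n:ℂ)*(1-ζ)) * (2-ζ) := by
        have h' := congrArg (starRingEnd ℂ) hp
        simp only [map_mul, map_add, map_one, map_ofNat, map_intCast, conj_ζ,
          Complex.conj_ofReal] at h'
        linear_combination h'
      calc (a:ℂ) * (((((m:ℝ)+2*(n:ℝ))/3 : ℝ):ℂ) + ((-2*((m:ℝ)+2*(n:ℝ))/3 : ℝ):ℂ) * ζ)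
          = (starRingEnd ℂ) (toC w₀) - toC w₀ := by
            push_cast
            linear_combination ((1:ℂ)/3) * hp - ((1:ℂ)/3) * hcd
        _ = (a:ℂ) * (((m':ℝ):ℂ) + ((n':ℝ):ℂ) * ζ) := by
            rw [hm'n']
            push_cast
            ring
    obtain ⟨hx3, -⟩ := coords_eq hEq
    have hm3 : (m:ℤ) + 2*n = 3*m' := by
      have : (m:ℝ) + 2*(n:ℝ) = 3*(m':ℝ) := by
        field_simp at hx3
        linarith
      exact_mod_cast this
    have hm3C : ((m:ℂ)) + 2*(n:ℂ) = 3*((m':ℂ)) := by exact_mod_cast hm3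
    -- so the planar part of w₀ is in the lattice
    have hpmem : toC w₀ ∈ P := by
      refine (hPE _).mpr ⟨m' - n, m', ?_⟩
      push_cast
      linear_combination ((1:ℂ)/3) * hp + ((a:ℂ)*(n:ℂ)/3) * ζ_sq + ((a:ℂ)/3*(1+ζ)) * hm3C
    have hpmem' : ∃ u, u ∈ L ∧ u 2 = 0 ∧ toC u = toC w₀ := hpmem
    obtain ⟨u, huL, hu2, huC⟩ := hpmem'
    have hvbL : vert b ∈ L := by
      have hzero : toC (w₀ - u) = 0 := by rw [toC_sub, huC]; ring
      have he : vert b = w₀ - u := by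
        funext i
        fin_cases i
        · exact (congrArg Complex.re hzero).symm
        · exact (congrArg Complex.im hzero).symm
        · show b = (w₀ - u) 2
          rw [show (w₀ - u) 2 = w₀ 2 - u 2 from rfl, hw₀2, hu2]
          ring
      rw [he]
      exact L.sub_mem hw₀L huL
    refine ⟨a, b, ha, hb, ?_⟩
    have hmain : (fun x : V3 => ![a * x 0, a * x 1, b * x 2]) ⁻¹' (L : Set V3) = triLat := by
      ext x
      simp only [Set.mem_preimage, SetLike.mem_coe, triLat, Set.mem_setOf_eq]
      constructor
      · intro hx
        obtain ⟨k, hk⟩ := hzdec _ hx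
        rw [show (![a * x 0, a * x 1, b * x 2]) 2 = b * x 2 from rfl] at hk
        have hx2 : x 2 = (k:ℝ) := by
          have h' : x 2 * b = (k:ℝ) * b := by linarith [hk]
          exact mul_right_cancel₀ (ne_of_gt hb) h'
        have hv'L : ![a * x 0, a * x 1, b * x 2] - k • (vert b) ∈ L :=
          L.sub_mem hx (AddSubgroup.zsmul_mem L hvbL k)
        have hv'2 : (![a * x 0, a * x 1, b * x 2] - k • (vert b)) 2 = 0 := by
          show b * x 2 - k • (vert b 2) = 0
          rw [hvert2, zsmul_eq_mul]
          rw [hx2]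
          ring
        obtain ⟨mm, nn, hmmnn⟩ := (hPE _).mp ⟨_, hv'L, hv'2, rfl⟩
        have hre := congrArg Complex.re hmmnn
        have him := congrArg Complex.im hmmnn
        rw [aE_re] at hre
        rw [aE_im] at him
        have hre' : a * x 0 - (k:ℝ) * 0 = a * ((mm:ℝ) + (nn:ℝ)*(1/2)) := by
          rw [← hre]
          show a * x 0 - (k:ℝ) * 0 = a * x 0 - k • (vert b 0)
          rw [show vert b 0 = 0 from rfl, zsmul_eq_mul]
        have him' : a * x 1 - (k:ℝ) * 0 = a * ((nn:ℝ)*(Real.sqrt 3/2)) := by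
          rw [← him]
          show a * x 1 - (k:ℝ) * 0 = a * x 1 - k • (vert b 1)
          rw [show vert b 1 = 0 from rfl, zsmul_eq_mul]
        have hx0 : x 0 = (mm:ℝ) + (nn:ℝ)*(1/2) :=
          mul_left_cancel₀ (ne_of_gt ha) (by linarith [hre'])
        have hx1 : x 1 = (nn:ℝ)*(Real.sqrt 3/2) :=
          mul_left_cancel₀ (ne_of_gt ha) (by linarith [him'])
        refine ⟨mm, nn, k, ?_⟩
        funext i
        fin_cases i
        · show x 0 = mm • (u₁ 0) + nn • (u₂ 0) + k • (e₃ 0)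
          rw [show u₁ 0 = 1 from rfl, show u₂ 0 = 1/2 from rfl, show e₃ 0 = 0 from rfl]
          rw [zsmul_eq_mul, zsmul_eq_mul, zsmul_eq_mul, hx0]
          ring
        · show x 1 = mm • (u₁ 1) + nn • (u₂ 1) + k • (e₃ 1)
          rw [show u₁ 1 = 0 from rfl, show u₂ 1 = Real.sqrt 3 / 2 from rfl,
            show e₃ 1 = 0 from rfl]
          rw [zsmul_eq_mul, zsmul_eq_mul, zsmul_eq_mul, hx1]
          ring
        · show x 2 = mm • (u₁ 2) + nn • (u₂ 2) + k • (e₃ 2)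
          rw [show u₁ 2 = 0 from rfl, show u₂ 2 = 0 from rfl, show e₃ 2 = 1 from rfl]
          rw [zsmul_eq_mul, zsmul_eq_mul, zsmul_eq_mul, hx2]
          ring
      · rintro ⟨mm, nn, k, rfl⟩
        obtain ⟨u', hu'L, hu'2, hu'C⟩ :
            ∃ u', u' ∈ L ∧ u' 2 = 0 ∧ toC u' = (a:ℂ) * ((mm:ℂ) + (nn:ℂ)*ζ) :=
          (hPE _).mpr ⟨mm, nn, rfl⟩
        set y : V3 := mm • u₁ + nn • u₂ + k • e₃ with hy
        have hu'0 : u' 0 = a * ((mm:ℝ) + (nn:ℝ)*(1/2)) := by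
          have := congrArg Complex.re hu'C
          rw [aE_re] at this
          exact this
        have hu'1 : u' 1 = a * ((nn:ℝ)*(Real.sqrt 3/2)) := by
          have := congrArg Complex.im hu'C
          rw [aE_im] at this
          exact this
        have he : ![a * y 0, a * y 1, b * y 2] = u' + k • (vert b) := by
          funext i
          fin_cases i
          · show a * y 0 = u' 0 + k • (vert b 0)
            rw [hu'0, show vert b 0 = 0 from rfl, zsmul_eq_mul, hy]
            show a * (mm • (u₁ 0) + nn • (u₂ 0) + k • (e₃ 0)) = _
            rw [show u₁ 0 = 1 from rfl, show u₂ 0 = 1/2 from rfl, show e₃ 0 = 0 from rfl]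
            rw [zsmul_eq_mul, zsmul_eq_mul, zsmul_eq_mul]
            ring
          · show a * y 1 = u' 1 + k • (vert b 1)
            rw [hu'1, show vert b 1 = 0 from rfl, zsmul_eq_mul, hy]
            show a * (mm • (u₁ 1) + nn • (u₂ 1) + k • (e₃ 1)) = _
            rw [show u₁ 1 = 0 from rfl, show u₂ 1 = Real.sqrt 3/2 from rfl,
              show e₃ 1 = 0 from rfl]
            rw [zsmul_eq_mul, zsmul_eq_mul, zsmul_eq_mul]
            ring
          · show b * y 2 = u' 2 + k • (vert b 2)
            rw [hu'2, hvert2, zsmul_eq_mul, hy]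
            show b * (mm • (u₁ 2) + nn • (u₂ 2) + k • (e₃ 2)) = _
            rw [show u₁ 2 = 0 from rfl, show u₂ 2 = 0 from rfl, show e₃ 2 = 1 from rfl]
            rw [zsmul_eq_mul, zsmul_eq_mul, zsmul_eq_mul]
            ring
        show ![a * y 0, a * y 1, b * y 2] ∈ L
        rw [he]
        exact L.add_mem hu'L (AddSubgroup.zsmul_mem L hvbL k)
    rw [hmain]
    exact Set.mem_insert _ _

  · -- centred case
    obtain ⟨m, n, hmn⟩ := (hPEc _).mp hc1
    have hane : (a:ℂ) ≠ 0 := by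
      simp only [ne_eq, Complex.ofReal_eq_zero]
      exact ne_of_gt ha
    have hp : toC w₀ = (a:ℂ) * ((m:ℂ) + (n:ℂ)*ζ) := by
      apply mul_left_cancel₀ two_sub_ζ_ne
      rw [hmn]
      ring
    obtain ⟨t, ht⟩ : ∃ t : ℤ, m - n = 3*t ∨ m - n = 3*t+1 ∨ m - n = 3*t+2 :=
      ⟨(m - n)/3, by omega⟩
    rcases ht with ht | ht | ht
    · -- offset 0 : triCentredLat
      have hmC : (m:ℂ) = 3*(t:ℂ) + (n:ℂ) := by exact_mod_cast (by omega : m = 3*t + n)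
      have hpmem : ∃ u, u ∈ L ∧ u 2 = 0 ∧ toC u = toC w₀ :=
        (hPEc _).mpr ⟨t, n + t, by
          rw [hp, Ec_form]
          push_cast
          linear_combination (a:ℂ) * hmC⟩
      obtain ⟨u, huL, hu2, huC⟩ := hpmem
      have hTC : toC (w₀ - u) = (a:ℂ) * toC e₃ := by
        rw [toC_sub, huC, show toC e₃ = 0 from rfl]
        ring
      have hT22 : (w₀ - u) 2 = b := by
        rw [show (w₀ - u) 2 = w₀ 2 - u 2 from rfl, hw₀2, hu2]
        ring
      refine ⟨a, b, ha, hb, ?_⟩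
      have hmain := centred_finish L a b ha hb e₃ (w₀ - u) rfl (L.sub_mem hw₀L huL)
        hTC hT22 hzdec (fun z => hPEc z)
      rw [hmain]
      exact Set.mem_insert_of_mem _ (Set.mem_insert _ _)
    · -- offset u₁ : triCentredLatU₁
      have hmC : (m:ℂ) = 3*(t:ℂ) + (n:ℂ) + 1 := by exact_mod_cast (by omega : m = 3*t + n + 1)
      have hpmem : ∃ u, u ∈ L ∧ u 2 = 0 ∧ toC u = toC w₀ - (a:ℂ) :=
        (hPEc _).mpr ⟨t, n + t, by
          rw [hp, Ec_form]
          push_cast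
          linear_combination (a:ℂ) * hmC⟩
      obtain ⟨u, huL, hu2, huC⟩ := hpmem
      have hTC : toC (w₀ - u) = (a:ℂ) * toC (u₁ + e₃) := by
        rw [toC_sub, huC, show toC (u₁ + e₃) = 1 by
          apply Complex.ext
          · show u₁ 0 + e₃ 0 = 1
            rw [show u₁ 0 = 1 from rfl, show e₃ 0 = 0 from rfl]; norm_num
          · show u₁ 1 + e₃ 1 = 0
            rw [show u₁ 1 = 0 from rfl, show e₃ 1 = 0 from rfl]; norm_num]
        ring
      have hT22 : (w₀ - u) 2 = b := by
        rw [show (w₀ - u) 2 = w₀ 2 - u 2 from rfl, hw₀2, hu2]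
        ring
      have hT2 : (u₁ + e₃) 2 = 1 := by
        show u₁ 2 + e₃ 2 = 1
        rw [show u₁ 2 = 0 from rfl, show e₃ 2 = 1 from rfl]; norm_num
      refine ⟨a, b, ha, hb, ?_⟩
      have hmain := centred_finish L a b ha hb (u₁ + e₃) (w₀ - u) hT2 (L.sub_mem hw₀L huL)
        hTC hT22 hzdec (fun z => hPEc z)
      rw [hmain]
      exact Set.mem_insert_of_mem _ (Set.mem_insert_of_mem _ (Set.mem_insert _ _))
    · -- offset u₂ : triCentredLatU₂
      have hmC : (m:ℂ) = 3*(t:ℂ) + (n:ℂ) + 2 := by exact_mod_cast (by omega : m = 3*t + n + 2)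
      have hpmem : ∃ u, u ∈ L ∧ u 2 = 0 ∧ toC u = toC w₀ - (a:ℂ) * ζ :=
        (hPEc _).mpr ⟨t + 1, n + t, by
          rw [hp, Ec_form]
          push_cast
          linear_combination (a:ℂ) * hmC⟩
      obtain ⟨u, huL, hu2, huC⟩ := hpmem
      have hTC : toC (w₀ - u) = (a:ℂ) * toC (u₂ + e₃) := by
        rw [toC_sub, huC, show toC (u₂ + e₃) = ζ by
          apply Complex.ext
          · show u₂ 0 + e₃ 0 = ζ.re
            rw [show u₂ 0 = 1/2 from rfl, show e₃ 0 = 0 from rfl, ζ_re]; norm_num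
          · show u₂ 1 + e₃ 1 = ζ.im
            rw [show u₂ 1 = Real.sqrt 3/2 from rfl, show e₃ 1 = 0 from rfl, ζ_im]; norm_num]
        ring
      have hT22 : (w₀ - u) 2 = b := by
        rw [show (w₀ - u) 2 = w₀ 2 - u 2 from rfl, hw₀2, hu2]
        ring
      have hT2 : (u₂ + e₃) 2 = 1 := by
        show u₂ 2 + e₃ 2 = 1
        rw [show u₂ 2 = 0 from rfl, show e₃ 2 = 1 from rfl]; norm_num
      refine ⟨a, b, ha, hb, ?_⟩
      have hmain := centred_finish L a b ha hb (u₂ + e₃) (w₀ - u) hT2 (L.sub_mem hw₀L huL)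
        hTC hT22 hzdec (fun z => hPEc z)
      rw [hmain]
      exact Set.mem_insert_of_mem _ (Set.mem_insert_of_mem _
        (Set.mem_insert_of_mem _ (Set.mem_singleton _)))


end
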